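/- For all w, z ∈ X⁺ (words over X = A ∪ A_G), f̌(wz) = f̌(f̌(w) f̌(z)), where f̌ is extended to X⁺ as described; in particular f̌ ∘ f̌ = f̌. -/

import Mathlib

open List

variable {A : Type*} {G : Type*} {A_G : Type*}

/-- `L̈`: the words not in `L` whose maximal proper prefix and suffix are in `L`. -/
def Ddot (L : Set (List A)) : Set (List A) :=
  {v | v ∉ L ∧ v.dropLast ∈ L ∧ v.tail ∈ L}

/-- `IsSc L w s` : `s` is the sequence of coordinates of `w` determined by `L`,
via the recursive construction of the paper: if `w ∈ L` then `s = (w)`; otherwise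
select an occurrence `w = w' v w''` of a factor `v ∈ L̈` and put
`s = sc_L[w' v_α] (v) sc_L[v_ω w'']`. -/
inductive IsSc (L : Set (List A)) : List A → List (List A) → Prop
  | base (w : List A) (hw : w ∈ L) : IsSc L w [w]
  | step (w' w'' v : List A) (s₁ s₂ : List (List A)) (hv : v ∈ Ddot L)
      (h₁ : IsSc L (w' ++ v.dropLast) s₁) (h₂ : IsSc L (v.tail ++ w'') s₂) :
      IsSc L (w' ++ v ++ w'') (s₁ ++ v :: s₂)

open Classical in
/-- `sc_L[w]`, the sequence of coordinates of `w` determined by `L`. -/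
noncomputable def scL (L : Set (List A)) (w : List A) : List (List A) :=
  if h : ∃ s, IsSc L w s then h.choose else []
section CoreG
variable [Group G]

/-- Evaluation of a word over `A_G` in the group `G`. -/
def evalW (evA : A_G → G) (u : List A_G) : G := (u.map evA).prod

/-- `f̂ : A* → G`. -/
noncomputable def fhat (L : Set (List A)) (f : List A → G) (w : List A) : G :=
  ((scL L w).map f).prod

/-- first coordinate (word part of `f̀`). -/
noncomputable def graveWord (L : Set (List A)) (w : List A) : List A :=
  (scL L w).headI

/-- group part of `f̀`. -/
noncomputable def graveG (L : Set (List A)) (f : List A → G) (w : List A) : G :=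
  ((scL L w).tail.map f).prod

/-- last coordinate (word part of `f́`). -/
noncomputable def acuteWord (L : Set (List A)) (w : List A) : List A :=
  (scL L w).getLastD []

/-- group part of `f́`. -/
noncomputable def acuteG (L : Set (List A)) (f : List A → G) (w : List A) : G :=
  ((scL L w).dropLast.map f).prod

/-- The word over `X = A ⊕ A_G` determined by a coordinate sequence:
`w₀ f(ẅ₁)f(w₁)⋯f(ẅ_m) w_m`, the middle group element written as its
chosen representative word over `A_G`. -/
def checkOfSeq (f : List A → G) (rep : G → List A_G) :
    List (List A) → List (A ⊕ A_G)
  | [] => []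
  | [w] => w.map Sum.inl
  | w :: rest =>
      w.map Sum.inl ++ (rep ((rest.dropLast.map f).prod)).map Sum.inr ++
        (rest.getLastD []).map Sum.inl

/-- longest prefix of `A`-letters. -/
def takeA : List (A ⊕ A_G) → List A
  | Sum.inl a :: r => a :: takeA r
  | _ => []

def dropA : List (A ⊕ A_G) → List (A ⊕ A_G)
  | Sum.inl _ :: r => dropA r
  | w => w

/-- longest prefix of `A_G`-letters. -/
def takeG : List (A ⊕ A_G) → List A_G
  | Sum.inr b :: r => b :: takeG r
  | _ => []

def dropG : List (A ⊕ A_G) → List (A ⊕ A_G)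
  | Sum.inr _ :: r => dropG r
  | w => w

/-- Processing of the part `g₁u₁g₂u₂⋯g_nu_n` of a mixed word: returns the group
element `eval(g₁)·f̂(u₁)·…·eval(g_n)·(acute part of u_n)` together with the final
word coordinate of `u_n`.  (Fuel-based recursion.) -/
noncomputable def midRunAux (L : Set (List A)) (f : List A → G) (evA : A_G → G) :
    ℕ → List (A ⊕ A_G) → G × List A
  | 0, _ => (1, [])
  | n + 1, w =>
      match dropA (dropG w) with
      | [] => (evalW evA (takeG w) * acuteG L f (takeA (dropG w)),
               acuteWord L (takeA (dropG w)))
      | r' => (evalW evA (takeG w) * fhat L f (takeA (dropG w)) *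
                 (midRunAux L f evA n r').1,
               (midRunAux L f evA n r').2)

/-- The extension `f̌ : X⁺ → Z ⊆ X⁺` of `f̌` to mixed words
(`f̌(u₀g₁u₁⋯g_nu_n) = f̀(u₀) g₁ f̂(u₁) ⋯ g_n f́(u_n)`, the middle group
element written as its representative word). -/
noncomputable def fcheckX (L : Set (List A)) (f : List A → G) (evA : A_G → G)
    (rep : G → List A_G) (w : List (A ⊕ A_G)) : List (A ⊕ A_G) :=
  match dropA w with
  | [] => checkOfSeq f rep (scL L (takeA w))
  | r =>
      (graveWord L (takeA w)).map Sum.inl ++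
        (rep (graveG L f (takeA w) * (midRunAux L f evA r.length r).1)).map Sum.inr ++
        (midRunAux L f evA r.length r).2.map Sum.inl

end CoreG


namespace SC

/- list helpers -/
theorem headI_app {α} [Inhabited α] {l l' : List α} (h : l ≠ []) : (l ++ l').headI = l.headI := by
  cases l with | nil => exact absurd rfl h | cons a t => rfl

theorem tail_app {α} {l l' : List α} (h : l ≠ []) : (l ++ l').tail = l.tail ++ l' := by
  cases l with | nil => exact absurd rfl h | cons a t => rfl

theorem getLastD_ne {α} {l : List α} (h : l ≠ []) (d d' : α) : l.getLastD d = l.getLastD d' := by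
  cases l with
  | nil => exact absurd rfl h
  | cons a t => rw [List.getLastD_cons, List.getLastD_cons]

theorem getLastD_app {α} {l l' : List α} (h : l' ≠ []) (d : α) :
    (l ++ l').getLastD d = l'.getLastD d := by
  induction l generalizing d with
  | nil => rfl
  | cons a t ih =>
      rw [cons_append, List.getLastD_cons, ih a, getLastD_ne h]

theorem dropLast_app {α} {l l' : List α} (h : l' ≠ []) :
    (l ++ l').dropLast = l ++ l'.dropLast := by
  induction l with
  | nil => rfl
  | cons a t ih =>
      have ht : t ++ l' ≠ [] := by simp [h]
      rw [cons_append, List.dropLast_cons_of_ne_nil ht, ih, cons_append]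

theorem dropLast_app_getLastD {α} {l : List α} (h : l ≠ []) (d : α) :
    l.dropLast ++ [l.getLastD d] = l := by
  induction l with
  | nil => exact absurd rfl h
  | cons a t ih =>
      cases t with
      | nil => rfl
      | cons b t' =>
          rw [List.getLastD_cons, List.dropLast_cons_of_ne_nil (by simp), cons_append,
            getLastD_ne (l := b :: t') (by simp) a d, ih (by simp)]

variable {L : Set (List A)}

theorem isc_ne_nil {w : List A} {s : List (List A)} (h : IsSc L w s) : s ≠ [] := by
  cases h <;> simp

variable (hE : [] ∉ L)
  (hFac : ∀ u w : List A, w ∈ L → u ≠ [] → u <:+: w → u ∈ L)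
  (hA : ∀ a : A, [a] ∈ L)

omit hE hFac in
include hA in
theorem isSc_exists : ∀ (n : ℕ) (w : List A), w.length ≤ n → w ≠ [] → ∃ s, IsSc L w s := by
  intro n
  induction n with
  | zero => intro w hl hw; simp [List.length_eq_zero_iff.mp (Nat.le_zero.mp hl)] at hw
  | succ n ih =>
      intro w hl hw
      by_cases hwL : w ∈ L
      · exact ⟨[w], IsSc.base w hwL⟩
      · -- find a minimal nonempty factor not in L
        have hex : ∃ k, ∃ v : List A, v.length = k ∧ v ≠ [] ∧ v <:+: w ∧ v ∉ L :=
          ⟨w.length, w, rfl, hw, List.infix_rfl, hwL⟩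
        classical
        obtain ⟨v, hvlen, hvne, hvinf, hvL⟩ := Nat.find_spec hex
        have hmin : ∀ u : List A, u ≠ [] → u <:+: w → u ∉ L → v.length ≤ u.length := by
          intro u h1 h2 h3
          have := Nat.find_min' hex (m := u.length) ⟨u, rfl, h1, h2, h3⟩
          omega
        have hv2 : 2 ≤ v.length := by
          rcases v with _ | ⟨a, _ | ⟨b, t⟩⟩
          · exact absurd rfl hvne
          · exact absurd (hA a) hvL
          · simp
        have hdl : v.dropLast ∈ L := by
          by_contra hc
          have h1 : v.dropLast ≠ [] :=
            List.ne_nil_of_length_pos (by rw [List.length_dropLast]; omega)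
          have h2 : v.dropLast <:+: w := (List.dropLast_prefix v).isInfix.trans hvinf
          have := hmin _ h1 h2 hc
          rw [List.length_dropLast] at this; omega
        have htl : v.tail ∈ L := by
          by_contra hc
          have h1 : v.tail ≠ [] :=
            List.ne_nil_of_length_pos (by rw [List.length_tail]; omega)
          have h2 : v.tail <:+: w := (List.tail_suffix v).isInfix.trans hvinf
          have := hmin _ h1 h2 hc
          rw [List.length_tail] at this; omega
        obtain ⟨w', w'', hsplit⟩ := hvinf
        obtain ⟨s₁, hs₁⟩ := ih (w' ++ v.dropLast) (by
            have : w.length = w'.length + v.length + w''.length := by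
              rw [← hsplit]; simp; omega
            simp [List.length_dropLast]; omega)
          (by
            have h1 : v.dropLast ≠ [] :=
              List.ne_nil_of_length_pos (by rw [List.length_dropLast]; omega)
            intro hc; rw [List.append_eq_nil_iff] at hc; exact h1 hc.2)
        obtain ⟨s₂, hs₂⟩ := ih (v.tail ++ w'') (by
            have : w.length = w'.length + v.length + w''.length := by
              rw [← hsplit]; simp; omega
            simp [List.length_tail]; omega)
          (by
            have h1 : v.tail ≠ [] :=
              List.ne_nil_of_length_pos (by rw [List.length_tail]; omega)
            intro hc; rw [List.append_eq_nil_iff] at hc; exact h1 hc.1)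
        exact ⟨s₁ ++ v :: s₂, hsplit ▸ IsSc.step w' w'' v s₁ s₂ ⟨hvL, hdl, htl⟩ hs₁ hs₂⟩

include hE in
theorem ddot_ne {v : List A} (hv : v ∈ Ddot L) : v ≠ [] := by
  intro h; subst h; exact hE hv.2.1

include hE in
theorem mem_ne {v : List A} (hv : v ∈ L) : v ≠ [] := by
  intro h; subst h; exact hE hv

include hE in
theorem isc_word_ne {w : List A} {s : List (List A)} (h : IsSc L w s) : w ≠ [] := by
  induction h with
  | base w hw => exact mem_ne hE hw
  | step w' w'' v s₁ s₂ hv h₁ h₂ =>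
      intro hc
      rw [List.append_eq_nil_iff, List.append_eq_nil_iff] at hc
      exact ddot_ne hE hv hc.1.2

/-- glue when the left part is a single `L`-word -/
theorem isc_glue_base {v : List A} {t : List (List A)} (h : IsSc L v t) :
    ∀ (u : List A) (r : List (List A)), IsSc L (u ++ t.headI) r →
      IsSc L (u ++ v) (r ++ t.tail) := by
  induction h with
  | base w hw => intro u r hr; simpa using hr
  | step w' w'' x s₁ s₂ hx h₁ h₂ ih₁ ih₂ =>
      intro u r hr
      have hs₁ : s₁ ≠ [] := isc_ne_nil h₁
      rw [headI_app hs₁] at hr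
      have h3 := ih₁ u r hr
      have h4 := IsSc.step (u ++ w') w'' x (r ++ s₁.tail) s₂ hx
        (by rwa [append_assoc]) h₂
      rw [tail_app hs₁, ← append_assoc, ← append_assoc]
      simpa [append_assoc] using h4

/-- the glue lemma -/
theorem isc_glue {u : List A} {s : List (List A)} (h : IsSc L u s) :
    ∀ (v : List A) (t : List (List A)), IsSc L v t →
    ∀ r, IsSc L (s.getLastD [] ++ t.headI) r →
      IsSc L (u ++ v) (s.dropLast ++ r ++ t.tail) := by
  induction h with
  | base w hw =>
      intro v t ht r hr
      simpa using isc_glue_base ht w r (by simpa using hr)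
  | step w' w'' x s₁ s₂ hx h₁ h₂ ih₁ ih₂ =>
      intro v t ht r hr
      have hs₂ : s₂ ≠ [] := isc_ne_nil h₂
      rw [getLastD_app (l' := x :: s₂) (by simp) [], List.getLastD_cons,
        getLastD_ne hs₂ x []] at hr
      have h3 := ih₂ v t ht r hr
      have h4 := IsSc.step w' (w'' ++ v) x s₁ (s₂.dropLast ++ r ++ t.tail) hx h₁
        (by rwa [← append_assoc])
      rw [dropLast_app (l' := x :: s₂) (by simp), List.dropLast_cons_of_ne_nil hs₂]
      simpa [append_assoc] using h4

include hE hFac hA in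
theorem step_step {n : ℕ}
    (ih : ∀ w : List A, w.length ≤ n → ∀ s s', IsSc L w s → IsSc L w s' → s = s')
    (w1 w2 x w1' w2' y : List A) (s1 s2 s1' s2' : List (List A))
    (hx : x ∈ Ddot L) (hy : y ∈ Ddot L)
    (heq : w1 ++ x ++ w2 = w1' ++ y ++ w2')
    (hlen : (w1 ++ x ++ w2).length ≤ n + 1)
    (h1 : IsSc L (w1 ++ x.dropLast) s1) (h2 : IsSc L (x.tail ++ w2) s2)
    (h1' : IsSc L (w1' ++ y.dropLast) s1') (h2' : IsSc L (y.tail ++ w2') s2')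
    (hle : w1.length ≤ w1'.length) :
    s1 ++ x :: s2 = s1' ++ y :: s2' := by
  have hxne : x ≠ [] := ddot_ne hE hx
  have hyne : y ≠ [] := ddot_ne hE hy
  have hxt : x.tail ≠ [] := mem_ne hE hx.2.2
  have hyt : y.tail ≠ [] := mem_ne hE hy.2.2
  have hxd : x.dropLast ≠ [] := mem_ne hE hx.2.1
  have hyd : y.dropLast ≠ [] := mem_ne hE hy.2.1
  -- get the gap word d
  have heq' : w1 ++ (x ++ w2) = w1' ++ (y ++ w2') := by simpa [append_assoc] using heq
  obtain ⟨d, hd1, hd2⟩ : ∃ d, w1' = w1 ++ d ∧ x ++ w2 = d ++ (y ++ w2') := by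
    rcases List.append_eq_append_iff.mp heq' with ⟨d, hd1, hd2⟩ | ⟨c, hc1, hc2⟩
    · exact ⟨d, hd1, hd2⟩
    · have : c = [] := by
        have := congrArg List.length hc1; simp at this
        exact List.eq_nil_of_length_eq_zero (by omega)
      subst this
      exact ⟨[], by simpa using hc1.symm, by simpa using hc2.symm⟩
  rcases eq_or_ne d [] with rfl | hdne
  · -- same starting position
    have hw1 : w1' = w1 := by simpa using hd1
    subst hw1
    simp only [nil_append] at hd2
    have same : ∀ (hyx : y = x) (hw2 : w2' = w2), s1 ++ x :: s2 = s1' ++ y :: s2' := by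
      intro hyx hw2
      rw [hyx] at h1' h2' ⊢
      rw [hw2] at h2'
      have e1 : s1 = s1' := ih _ (by
        simp only [length_append, length_dropLast] at hlen ⊢
        have : 1 ≤ x.length := List.length_pos_iff.mpr hxne
        omega) _ _ h1 h1'
      have e2 : s2 = s2' := ih _ (by
        simp only [length_append, length_tail] at hlen ⊢
        have : 1 ≤ x.length := List.length_pos_iff.mpr hxne
        omega) _ _ h2 h2'
      rw [e1, e2]
    rcases List.append_eq_append_iff.mp hd2 with ⟨e, he1, he2⟩ | ⟨e, he1, he2⟩
    · -- he1 : y = x ++ e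
      rcases eq_or_ne e [] with rfl | hene
      · exact same (by simpa using he1) (by simpa using he2.symm)
      · exfalso
        apply hx.1
        refine hFac x y.dropLast hy.2.1 hxne ⟨[], e.dropLast, ?_⟩
        rw [he1, dropLast_app hene]; simp
    · -- he1 : x = y ++ e
      rcases eq_or_ne e [] with rfl | hene
      · exact same (by simpa using he1.symm) (by simpa using he2)
      · exfalso
        apply hy.1
        refine hFac y x.dropLast hx.2.1 hyne ⟨[], e.dropLast, ?_⟩
        rw [he1, dropLast_app hene]; simp
  · -- d ≠ [] : x starts strictly earlier
    have hd2' : x ++ w2 = (d ++ y) ++ w2' := by simpa [append_assoc] using hd2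
    obtain ⟨e, he1, he2, hene⟩ : ∃ e, d ++ y = x ++ e ∧ w2 = e ++ w2' ∧ e ≠ [] := by
      rcases List.append_eq_append_iff.mp hd2' with ⟨e, he1, he2⟩ | ⟨c, hc1, hc2⟩
      · refine ⟨e, he1, he2, ?_⟩
        rintro rfl
        have hx1 : d ++ y = x := by simpa using he1
        exact hy.1 (hFac y x.tail hx.2.2 hyne ⟨d.tail, [], by
          rw [append_nil, ← tail_app hdne, hx1]⟩)
      · exfalso
        exact hy.1 (hFac y x.tail hx.2.2 hyne ⟨d.tail, c, by
          rw [hc1, append_assoc, append_assoc, tail_app hdne, ← append_assoc]⟩)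
    -- he1 : d ++ y = x ++ e
    have hM1 : d.tail ++ y = x.tail ++ e := by
      have := congrArg List.tail he1
      rwa [tail_app hdne, tail_app hxne] at this
    have hM2 : d.tail ++ y.dropLast = x.tail ++ e.dropLast := by
      have := congrArg List.dropLast hM1
      rwa [dropLast_app hyne, dropLast_app hene] at this
    have hMne : x.tail ++ e.dropLast ≠ [] := by
      intro hc; rw [List.append_eq_nil_iff] at hc; exact hxt hc.1
    obtain ⟨D, hD⟩ := isSc_exists (L := L) hA (x.tail ++ e.dropLast).length _ le_rfl hMne
    -- total length bookkeeping
    have hlen' : w1.length + x.length + w2.length ≤ n + 1 := by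
      simp only [length_append] at hlen; omega
    have hxlen : 1 ≤ x.length := List.length_pos_iff.mpr hxne
    have hylen : 1 ≤ y.length := List.length_pos_iff.mpr hyne
    have hdlen : 1 ≤ d.length := List.length_pos_iff.mpr hdne
    have helen : 1 ≤ e.length := List.length_pos_iff.mpr hene
    have hw2len : w2.length = e.length + w2'.length := by
      rw [he2]; simp
    -- s2 = D ++ y :: s2'
    have step2 : IsSc L (x.tail ++ w2) (D ++ y :: s2') := by
      have := IsSc.step d.tail w2' y D s2' hy (by rwa [← hM2] at hD) h2'
      have hw : d.tail ++ y ++ w2' = x.tail ++ w2 := by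
        rw [hM1, append_assoc, ← he2]
      rwa [hw] at this
    have e2 : s2 = D ++ y :: s2' := ih _ (by
        simp only [length_append, length_tail]; omega) _ _ h2 step2
    -- s1' = s1 ++ x :: D
    have step1 : IsSc L (w1' ++ y.dropLast) (s1 ++ x :: D) := by
      have := IsSc.step w1 e.dropLast x s1 D hx h1 hD
      have hq : x ++ e.dropLast = d ++ y.dropLast := by
        have hqq := congrArg List.dropLast he1.symm
        rwa [dropLast_app hene, dropLast_app hyne] at hqq
      have hw : w1 ++ x ++ e.dropLast = w1' ++ y.dropLast := by
        rw [hd1, append_assoc, hq, ← append_assoc]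
      rwa [hw] at this
    have e1 : s1' = s1 ++ x :: D := by
      refine ih _ ?_ _ _ h1' step1
      have := congrArg List.length he1
      simp only [length_append] at this
      simp only [length_append, length_dropLast, hd1]
      omega
    rw [e1, e2]; simp

include hE hFac hA in
theorem isSc_unique : ∀ (n : ℕ) (w : List A), w.length ≤ n →
    ∀ s s', IsSc L w s → IsSc L w s' → s = s' := by
  intro n
  induction n with
  | zero =>
      intro w hl s s' h h'
      have hwn : w = [] := List.eq_nil_of_length_eq_zero (by omega)
      exact absurd hwn (isc_word_ne hE h)
  | succ n ih =>
      intro w hl s s' h h'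
      cases h with
      | base _ hw =>
          cases h' with
          | base => rfl
          | step w1' w2' y s1' s2' hy h1' h2' =>
              exact absurd (hFac y _ hw (ddot_ne hE hy) ⟨w1', w2', rfl⟩) hy.1
      | step w1 w2 x s1 s2 hx h1 h2 =>
          generalize hgen : w1 ++ x ++ w2 = W at h' hl
          cases h' with
          | base _ hw =>
              exact absurd (hFac x _ hw (ddot_ne hE hx) ⟨w1, w2, hgen⟩) hx.1
          | step w1' w2' y s1' s2' hy h1' h2' =>
              have heq : w1 ++ x ++ w2 = w1' ++ y ++ w2' := hgen
              rcases le_total w1.length w1'.length with hle | hle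
              · exact step_step hE hFac hA ih w1 w2 x w1' w2' y s1 s2 s1' s2' hx hy heq
                  (heq ▸ hgen ▸ hl) h1 h2 h1' h2' hle
              · exact (step_step hE hFac hA ih w1' w2' y w1 w2 x s1' s2' s1 s2 hy hx heq.symm
                  (heq.symm ▸ hgen ▸ hl) h1' h2' h1 h2 hle).symm


include hE hFac hA in
theorem scL_eq {w : List A} {s : List (List A)} (h : IsSc L w s) : scL L w = s := by
  have hex : ∃ s, IsSc L w s := ⟨s, h⟩
  rw [scL, dif_pos hex]
  exact isSc_unique hE hFac hA w.length w le_rfl _ _ hex.choose_spec h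

include hE in
theorem scL_nil : scL L ([] : List A) = [] := by
  rw [scL, dif_neg]
  rintro ⟨s, hs⟩
  exact isc_word_ne hE hs rfl

include hA in
omit hE hFac in
theorem scL_spec {w : List A} (hw : w ≠ []) : IsSc L w (scL L w) := by
  have hex : ∃ s, IsSc L w s := isSc_exists hA w.length w le_rfl hw
  rw [scL, dif_pos hex]
  exact hex.choose_spec

include hE hFac hA in
theorem scL_mem {w : List A} (hw : w ∈ L) : scL L w = [w] :=
  scL_eq hE hFac hA (IsSc.base w hw)

theorem isc_head_mem {w : List A} {s : List (List A)} (h : IsSc L w s) : s.headI ∈ L := by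
  induction h with
  | base w hw => exact hw
  | step w' w'' v s₁ s₂ hv h₁ h₂ ih₁ ih₂ =>
      rw [headI_app (isc_ne_nil h₁)]; exact ih₁

theorem isc_last_mem {w : List A} {s : List (List A)} (h : IsSc L w s) : s.getLastD [] ∈ L := by
  induction h with
  | base w hw => simpa using hw
  | step w' w'' v s₁ s₂ hv h₁ h₂ ih₁ ih₂ =>
      rw [getLastD_app (l' := v :: s₂) (by simp), List.getLastD_cons,
        getLastD_ne (isc_ne_nil h₂) v []]
      exact ih₂

theorem isc_tail_ne {w : List A} {s : List (List A)} (h : IsSc L w s) (hwL : w ∉ L) :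
    s.tail ≠ [] := by
  cases h with
  | base _ hm => exact absurd hm hwL
  | step w' w'' v s₁ s₂ hv h₁ h₂ =>
      rw [tail_app (isc_ne_nil h₁)]; simp

include hA in
omit hE hFac in
theorem scL_ne_nil {w : List A} (hw : w ≠ []) : scL L w ≠ [] :=
  isc_ne_nil (scL_spec hA hw)

include hE hA in
omit hFac in
theorem scL_last_mem {w : List A} (hw : w ≠ []) : (scL L w).getLastD [] ∈ L :=
  isc_last_mem (scL_spec hA hw)

include hE hA in
omit hFac in
theorem scL_head_mem {w : List A} (hw : w ≠ []) : (scL L w).headI ∈ L :=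
  isc_head_mem (scL_spec hA hw)

theorem headI_tail {α} [Inhabited α] {l : List α} (h : l ≠ []) : l.headI :: l.tail = l := by
  cases l with | nil => exact absurd rfl h | cons a t => rfl

theorem headI_nil' {α} : (([] : List (List α))).headI = ([] : List α) := rfl

theorem headI_single {α} [Inhabited α] (a : α) : ([a] : List α).headI = a := rfl

include hE hFac hA in
theorem scL_glue {u v : List A} (hu : u ≠ []) (hv : v ≠ []) :
    scL L (u ++ v) = (scL L u).dropLast ++
      scL L ((scL L u).getLastD [] ++ (scL L v).headI) ++ (scL L v).tail := by
  have hsu := scL_spec hA hu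
  have hsv := scL_spec hA hv
  have hne : (scL L u).getLastD [] ++ (scL L v).headI ≠ [] := by
    intro hc
    rw [List.append_eq_nil_iff] at hc
    exact mem_ne hE (isc_last_mem hsu) hc.1
  exact scL_eq hE hFac hA (isc_glue hsu v _ hsv _ (scL_spec hA hne))

include hE hFac hA in
theorem scL_glueL (u v : List A) :
    scL L (u ++ v) = (scL L u).dropLast ++ scL L ((scL L u).getLastD [] ++ v) := by
  rcases eq_or_ne u [] with rfl | hu
  · simp [scL_nil hE]
  rcases eq_or_ne v [] with rfl | hv
  · have hlast : (scL L u).getLastD [] ∈ L := scL_last_mem hE hA hu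
    rw [append_nil, append_nil, scL_mem hE hFac hA hlast,
      dropLast_app_getLastD (scL_ne_nil hA hu)]
  · have hlastm : (scL L u).getLastD [] ∈ L := scL_last_mem hE hA hu
    have hlastne : (scL L u).getLastD [] ≠ [] := mem_ne hE hlastm
    have h1 := scL_glue hE hFac hA hu hv
    have h2 := scL_glue hE hFac hA hlastne hv
    rw [scL_mem hE hFac hA hlastm] at h2
    simp only [List.dropLast_singleton, List.getLastD_cons, List.getLastD_nil, nil_append] at h2
    rw [h1, append_assoc, ← h2]

include hE hFac hA in
theorem scL_glueR (u v : List A) :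
    scL L (u ++ v) = scL L (u ++ (scL L v).headI) ++ (scL L v).tail := by
  rcases eq_or_ne v [] with rfl | hv
  · rw [scL_nil hE, headI_nil']
    simp
  rcases eq_or_ne u [] with rfl | hu
  · have hhead : (scL L v).headI ∈ L := scL_head_mem hE hA hv
    rw [nil_append, nil_append, scL_mem hE hFac hA hhead]
    exact (headI_tail (scL_ne_nil hA hv)).symm
  · have hheadm : (scL L v).headI ∈ L := scL_head_mem hE hA hv
    have hheadne : (scL L v).headI ≠ [] := mem_ne hE hheadm
    have h1 := scL_glue hE hFac hA hu hv
    have h2 := scL_glue hE hFac hA hu hheadne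
    rw [scL_mem hE hFac hA hheadm] at h2
    simp only [List.dropLast_singleton, List.getLastD_cons, List.getLastD_nil, headI_single,
      List.tail_cons, append_nil] at h2
    rw [h1, h2]

end SC



namespace SC
section GroupLayer
variable [Group G] {L : Set (List A)} (f : List A → G)
variable (hE : [] ∉ L)
  (hFac : ∀ u w : List A, w ∈ L → u ≠ [] → u <:+: w → u ∈ L)
  (hA : ∀ a : A, [a] ∈ L)

include hE hA in
omit hFac in
theorem scL_tail_ne {w : List A} (hw : w ≠ []) (hwL : w ∉ L) : (scL L w).tail ≠ [] :=
  isc_tail_ne (scL_spec hA hw) hwL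

include hE in
omit hFac hA in
theorem fhat_nil : fhat L f ([] : List A) = 1 := by rw [fhat, scL_nil hE]; rfl

include hE in
omit hFac hA in
theorem acuteG_nil : acuteG L f ([] : List A) = 1 := by rw [acuteG, scL_nil hE]; rfl

include hE in
omit hFac hA in
theorem graveG_nil : graveG L f ([] : List A) = 1 := by rw [graveG, scL_nil hE]; rfl

include hE in
omit hFac hA in
theorem acuteWord_nil : acuteWord L ([] : List A) = [] := by rw [acuteWord, scL_nil hE]; rfl

include hE in
omit hFac hA in
theorem graveWord_nil : graveWord L ([] : List A) = [] := by rw [graveWord, scL_nil hE]; rfl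

include hE hFac hA in
theorem graveWord_memL {w : List A} (hw : w ∈ L) : graveWord L w = w := by
  rw [graveWord, scL_mem hE hFac hA hw]; rfl

include hE hFac hA in
theorem acuteWord_memL {w : List A} (hw : w ∈ L) : acuteWord L w = w := by
  rw [acuteWord, scL_mem hE hFac hA hw]; rfl

include hE hFac hA in
theorem graveG_memL {w : List A} (hw : w ∈ L) : graveG L f w = 1 := by
  rw [graveG, scL_mem hE hFac hA hw]; rfl

include hE hFac hA in
theorem acuteG_memL {w : List A} (hw : w ∈ L) : acuteG L f w = 1 := by
  rw [acuteG, scL_mem hE hFac hA hw]; rfl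

include hE hFac hA in
theorem fhat_memL {w : List A} (hw : w ∈ L) : fhat L f w = f w := by
  rw [fhat, scL_mem hE hFac hA hw]; simp

include hE hFac hA in
theorem graveWord_L1 {w : List A} (hw : w ∈ L ∨ w = []) : graveWord L w = w := by
  rcases hw with hw | rfl
  · exact graveWord_memL hE hFac hA hw
  · exact graveWord_nil hE

include hE hFac hA in
theorem acuteWord_L1 {w : List A} (hw : w ∈ L ∨ w = []) : acuteWord L w = w := by
  rcases hw with hw | rfl
  · exact acuteWord_memL hE hFac hA hw
  · exact acuteWord_nil hE

include hE hFac hA in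
theorem graveG_L1 {w : List A} (hw : w ∈ L ∨ w = []) : graveG L f w = 1 := by
  rcases hw with hw | rfl
  · exact graveG_memL f hE hFac hA hw
  · exact graveG_nil f hE

include hE hFac hA in
theorem acuteG_L1 {w : List A} (hw : w ∈ L ∨ w = []) : acuteG L f w = 1 := by
  rcases hw with hw | rfl
  · exact acuteG_memL f hE hFac hA hw
  · exact acuteG_nil f hE

include hE hA in
omit hFac in
theorem acuteWord_mem_or (w : List A) : acuteWord L w ∈ L ∨ acuteWord L w = [] := by
  rcases eq_or_ne w [] with rfl | hw
  · exact Or.inr (acuteWord_nil hE)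
  · exact Or.inl (scL_last_mem hE hA hw)

include hE hA in
omit hFac in
theorem graveWord_mem_or (w : List A) : graveWord L w ∈ L ∨ graveWord L w = [] := by
  rcases eq_or_ne w [] with rfl | hw
  · exact Or.inr (graveWord_nil hE)
  · exact Or.inl (scL_head_mem hE hA hw)

include hE hFac hA in
theorem fhat_appL (u v : List A) :
    fhat L f (u ++ v) = acuteG L f u * fhat L f (acuteWord L u ++ v) := by
  rw [fhat, scL_glueL hE hFac hA u v, List.map_append, List.prod_append]; rfl

include hE hFac hA in
theorem fhat_appR (u v : List A) :
    fhat L f (u ++ v) = fhat L f (u ++ graveWord L v) * graveG L f v := by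
  rw [fhat, scL_glueR hE hFac hA u v, List.map_append, List.prod_append]; rfl

include hE hFac hA in
theorem acuteG_app (u : List A) {v : List A} (hv : v ≠ []) :
    acuteG L f (u ++ v) = acuteG L f u * acuteG L f (acuteWord L u ++ v) := by
  have hne : scL L ((scL L u).getLastD [] ++ v) ≠ [] :=
    scL_ne_nil hA (by intro hc; rw [List.append_eq_nil_iff] at hc; exact hv hc.2)
  rw [acuteG, scL_glueL hE hFac hA u v, dropLast_app hne, List.map_append, List.prod_append]
  rfl

include hE hFac hA in
theorem acuteWord_app (u : List A) {v : List A} (hv : v ≠ []) :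
    acuteWord L (u ++ v) = acuteWord L (acuteWord L u ++ v) := by
  have hne : scL L ((scL L u).getLastD [] ++ v) ≠ [] :=
    scL_ne_nil hA (by intro hc; rw [List.append_eq_nil_iff] at hc; exact hv hc.2)
  rw [acuteWord, scL_glueL hE hFac hA u v, getLastD_app hne]; rfl

include hE hFac hA in
theorem graveWord_app {u : List A} (v : List A) (hu : u ≠ []) :
    graveWord L (u ++ v) = graveWord L (u ++ graveWord L v) := by
  have hne : scL L (u ++ (scL L v).headI) ≠ [] :=
    scL_ne_nil hA (by intro hc; rw [List.append_eq_nil_iff] at hc; exact hu hc.1)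
  rw [graveWord, scL_glueR hE hFac hA u v, headI_app hne]; rfl

include hE hFac hA in
theorem graveG_app {u : List A} (v : List A) (hu : u ≠ []) :
    graveG L f (u ++ v) = graveG L f (u ++ graveWord L v) * graveG L f v := by
  have hne : scL L (u ++ (scL L v).headI) ≠ [] :=
    scL_ne_nil hA (by intro hc; rw [List.append_eq_nil_iff] at hc; exact hu hc.1)
  rw [graveG, scL_glueR hE hFac hA u v, tail_app hne, List.map_append, List.prod_append]
  rfl

include hA in
omit hE hFac in
theorem fhat_headI {u : List A} (hu : u ≠ []) :
    fhat L f u = f (graveWord L u) * graveG L f u := by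
  conv_lhs => rw [fhat, ← headI_tail (scL_ne_nil hA hu)]
  rw [List.map_cons, List.prod_cons]; rfl

include hA in
omit hE hFac in
theorem fhat_last {u : List A} (hu : u ≠ []) :
    fhat L f u = acuteG L f u * f (acuteWord L u) := by
  conv_lhs => rw [fhat, ← dropLast_app_getLastD (scL_ne_nil hA hu) []]
  rw [List.map_append, List.prod_append, List.map_singleton, List.prod_singleton]; rfl

end GroupLayer
end SC

namespace SC
section MixA
variable {L : Set (List A)}

@[simp] theorem takeA_nil : takeA ([] : List (A ⊕ A_G)) = [] := rfl
@[simp] theorem takeA_inl (a : A) (r : List (A ⊕ A_G)) :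
    takeA (Sum.inl a :: r) = a :: takeA r := rfl
@[simp] theorem takeA_inr (b : A_G) (r : List (A ⊕ A_G)) :
    takeA (Sum.inr b :: r) = [] := rfl
@[simp] theorem dropA_nil : dropA ([] : List (A ⊕ A_G)) = [] := rfl
@[simp] theorem dropA_inl (a : A) (r : List (A ⊕ A_G)) :
    dropA (Sum.inl a :: r) = dropA r := rfl
@[simp] theorem dropA_inr (b : A_G) (r : List (A ⊕ A_G)) :
    dropA (Sum.inr b :: r) = Sum.inr b :: r := rfl
@[simp] theorem takeG_nil : takeG ([] : List (A ⊕ A_G)) = [] := rfl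
@[simp] theorem takeG_inr (b : A_G) (r : List (A ⊕ A_G)) :
    takeG (Sum.inr b :: r) = b :: takeG r := rfl
@[simp] theorem takeG_inl (a : A) (r : List (A ⊕ A_G)) :
    takeG (Sum.inl a :: r) = [] := rfl
@[simp] theorem dropG_nil : dropG ([] : List (A ⊕ A_G)) = [] := rfl
@[simp] theorem dropG_inr (b : A_G) (r : List (A ⊕ A_G)) :
    dropG (Sum.inr b :: r) = dropG r := rfl
@[simp] theorem dropG_inl (a : A) (r : List (A ⊕ A_G)) :
    dropG (Sum.inl a :: r) = Sum.inl a :: r := rfl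

theorem takeA_map_inl (u : List A) (r : List (A ⊕ A_G)) (hr : r = [] ∨ ∃ b t, r = Sum.inr b :: t) :
    takeA (u.map Sum.inl ++ r) = u := by
  induction u with
  | nil =>
      rcases hr with rfl | ⟨b, t, rfl⟩
      · rfl
      · simp
  | cons a u ih => simpa using ih

theorem dropA_map_inl (u : List A) (r : List (A ⊕ A_G)) (hr : r = [] ∨ ∃ b t, r = Sum.inr b :: t) :
    dropA (u.map Sum.inl ++ r) = r := by
  induction u with
  | nil =>
      rcases hr with rfl | ⟨b, t, rfl⟩
      · rfl
      · simp
  | cons a u ih => simpa using ih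

theorem takeG_map_inr (g : List A_G) (r : List (A ⊕ A_G)) (hr : r = [] ∨ ∃ a t, r = Sum.inl a :: t) :
    takeG (g.map Sum.inr ++ r) = g := by
  induction g with
  | nil =>
      rcases hr with rfl | ⟨a, t, rfl⟩
      · rfl
      · simp
  | cons b g ih => simpa using ih

theorem dropG_map_inr (g : List A_G) (r : List (A ⊕ A_G)) (hr : r = [] ∨ ∃ a t, r = Sum.inl a :: t) :
    dropG (g.map Sum.inr ++ r) = r := by
  induction g with
  | nil =>
      rcases hr with rfl | ⟨a, t, rfl⟩
      · rfl
      · simp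
  | cons b g ih => simpa using ih

theorem takeA_app_dropA (w : List (A ⊕ A_G)) : (takeA w).map Sum.inl ++ dropA w = w := by
  induction w with
  | nil => rfl
  | cons x r ih => cases x <;> simp [ih]

theorem takeG_app_dropG (w : List (A ⊕ A_G)) : (takeG w).map Sum.inr ++ dropG w = w := by
  induction w with
  | nil => rfl
  | cons x r ih => cases x <;> simp [ih]

theorem dropA_cases (w : List (A ⊕ A_G)) : dropA w = [] ∨ ∃ b t, dropA w = Sum.inr b :: t := by
  induction w with
  | nil => exact Or.inl rfl
  | cons x r ih =>
      cases x with
      | inl a => simpa using ih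
      | inr b => exact Or.inr ⟨b, r, rfl⟩

theorem dropG_cases (w : List (A ⊕ A_G)) : dropG w = [] ∨ ∃ a t, dropG w = Sum.inl a :: t := by
  induction w with
  | nil => exact Or.inl rfl
  | cons x r ih =>
      cases x with
      | inl a => exact Or.inr ⟨a, r, rfl⟩
      | inr b => simpa using ih

theorem length_dropA_le (w : List (A ⊕ A_G)) : (dropA w).length ≤ w.length := by
  induction w with
  | nil => exact le_rfl
  | cons x r ih => cases x <;> simp <;> omega

theorem length_dropG_le (w : List (A ⊕ A_G)) : (dropG w).length ≤ w.length := by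
  induction w with
  | nil => exact le_rfl
  | cons x r ih => cases x <;> simp <;> omega

theorem length_dAG_lt {w : List (A ⊕ A_G)} (hw : w ≠ []) :
    (dropA (dropG w)).length < w.length := by
  cases w with
  | nil => exact absurd rfl hw
  | cons x r =>
      cases x with
      | inl a =>
          have := length_dropA_le (A := A) (A_G := A_G) r
          simp only [dropG_inl, dropA_inl]
          simp only [length_cons]
          omega
      | inr b =>
          have h1 := length_dropG_le (A := A) (A_G := A_G) r
          have h2 := length_dropA_le (A := A) (A_G := A_G) (dropG r)
          simp only [dropG_inr, length_cons]
          omega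

theorem takeA_append_nil {w : List (A ⊕ A_G)} (z : List (A ⊕ A_G)) (h : dropA w = []) :
    takeA (w ++ z) = takeA w ++ takeA z ∧ dropA (w ++ z) = dropA z := by
  induction w with
  | nil => exact ⟨rfl, rfl⟩
  | cons x r ih =>
      cases x with
      | inl a =>
          simp only [dropA_inl] at h
          obtain ⟨h1, h2⟩ := ih h
          simp [h1, h2]
      | inr b => simp at h

theorem takeA_append_cons {w : List (A ⊕ A_G)} (z : List (A ⊕ A_G)) {b : A_G}
    {t : List (A ⊕ A_G)} (h : dropA w = Sum.inr b :: t) :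
    takeA (w ++ z) = takeA w ∧ dropA (w ++ z) = Sum.inr b :: (t ++ z) := by
  induction w with
  | nil => simp at h
  | cons x r ih =>
      cases x with
      | inl a =>
          simp only [dropA_inl] at h
          obtain ⟨h1, h2⟩ := ih h
          simp [h1, h2]
      | inr b' =>
          simp only [dropA_inr] at h
          obtain ⟨rfl, rfl⟩ : b' = b ∧ r = t := by
            have h1 := h
            injection h1 with e1 e2
            exact ⟨Sum.inr.injEq b' b ▸ by injection e1, e2⟩
          exact ⟨rfl, rfl⟩

theorem map_inr_cons (g : List A_G) (hg : g ≠ []) (w : List (A ⊕ A_G)) :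
    ∃ b t, g.map Sum.inr ++ w = Sum.inr b :: t := by
  cases g with
  | nil => exact absurd rfl hg
  | cons b g' => exact ⟨b, g'.map Sum.inr ++ w, by simp⟩

end MixA
end SC

noncomputable def Mfun [Group G] (L : Set (List A)) (f : List A → G) (evA : A_G → G)
    (w : List (A ⊕ A_G)) : G × List A :=
  midRunAux L f evA w.length w

namespace SC
section MidLayer
variable [Group G] {L : Set (List A)} (f : List A → G) (evA : A_G → G)
variable (hE : [] ∉ L)
  (hFac : ∀ u w : List A, w ∈ L → u ≠ [] → u <:+: w → u ∈ L)
  (hA : ∀ a : A, [a] ∈ L)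

theorem evalW_nil : evalW (A_G := A_G) (G := G) evA [] = 1 := rfl

theorem evalW_cons (b : A_G) (g : List A_G) :
    evalW evA (b :: g) = evA b * evalW evA g := by
  rw [evalW, evalW, List.map_cons, List.prod_cons]

theorem evalW_app (g g' : List A_G) :
    evalW evA (g ++ g') = evalW evA g * evalW evA g' := by
  rw [evalW, evalW, evalW, List.map_append, List.prod_append]

theorem mid_succ_nil (n : ℕ) (w : List (A ⊕ A_G)) (h : dropA (dropG w) = []) :
    midRunAux L f evA (n + 1) w =
      (evalW evA (takeG w) * acuteG L f (takeA (dropG w)), acuteWord L (takeA (dropG w))) := by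
  simp only [midRunAux]
  rw [h]

theorem mid_succ_cons (n : ℕ) (w : List (A ⊕ A_G)) (x : A ⊕ A_G) (t : List (A ⊕ A_G))
    (h : dropA (dropG w) = x :: t) :
    midRunAux L f evA (n + 1) w =
      (evalW evA (takeG w) * fhat L f (takeA (dropG w)) * (midRunAux L f evA n (x :: t)).1,
        (midRunAux L f evA n (x :: t)).2) := by
  simp only [midRunAux]
  rw [h]

include hE in
theorem mid_stab : ∀ (n : ℕ) (w : List (A ⊕ A_G)), w.length ≤ n →
    midRunAux L f evA (n + 1) w = midRunAux L f evA n w := by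
  intro n
  induction n with
  | zero =>
      intro w hl
      have hw : w = [] := List.eq_nil_of_length_eq_zero (by omega)
      subst hw
      rw [mid_succ_nil f evA 0 [] rfl]
      show _ = (1, [])
      simp only [dropG_nil, takeG_nil, takeA_nil, evalW_nil, acuteG_nil f hE,
        acuteWord_nil hE, one_mul]
  | succ n ih =>
      intro w hl
      rcases eq_or_ne w [] with rfl | hw
      · rw [mid_succ_nil f evA (n+1) [] rfl, mid_succ_nil f evA n [] rfl]
      rcases dropA_cases (dropG w) with h | ⟨b, t, h⟩
      · rw [mid_succ_nil f evA (n+1) w h, mid_succ_nil f evA n w h]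
      · rw [mid_succ_cons f evA (n+1) w _ _ h, mid_succ_cons f evA n w _ _ h]
        have hlt : (Sum.inr b :: t : List (A ⊕ A_G)).length ≤ n := by
          have := length_dAG_lt hw
          rw [h] at this
          omega
        rw [ih _ hlt]

include hE in
theorem mid_norm {w : List (A ⊕ A_G)} : ∀ {n : ℕ}, w.length ≤ n →
    midRunAux L f evA n w = Mfun L f evA w := by
  intro n
  induction n with
  | zero =>
      intro h
      have : w.length = 0 := by omega
      rw [Mfun, this]
  | succ n ih =>
      intro h
      rcases eq_or_ne w.length (n + 1) with he | hne
      · rw [Mfun, he]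
      · rw [mid_stab f evA hE n w (by omega), ih (by omega)]

include hE in
theorem M_nil : Mfun L f evA ([] : List (A ⊕ A_G)) = (1, []) := rfl

include hE in
theorem M_inr1 (b : A_G) (w : List (A ⊕ A_G)) :
    Mfun L f evA (Sum.inr b :: w) = (evA b * (Mfun L f evA w).1, (Mfun L f evA w).2) := by
  have hMw : Mfun L f evA (Sum.inr b :: w) = midRunAux L f evA (w.length + 1) (Sum.inr b :: w) := rfl
  rcases dropA_cases (dropG w) with h | ⟨b', t, h⟩
  · have h2 : dropA (dropG (Sum.inr b :: w)) = [] := by simpa using h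
    rw [hMw, mid_succ_nil f evA _ _ h2]
    simp only [dropG_inr, takeG_inr, evalW_cons]
    rcases eq_or_ne w [] with rfl | hw
    · rw [M_nil f evA hE]
      simp only [dropG_nil, takeG_nil, takeA_nil, evalW_nil, acuteG_nil f hE,
        acuteWord_nil hE, one_mul, mul_one]
    · obtain ⟨m, hm⟩ : ∃ m, w.length = m + 1 :=
        ⟨w.length - 1, by have := List.length_pos_iff.mpr hw; omega⟩
      rw [Mfun, hm, mid_succ_nil f evA _ _ h]
      simp only [mul_assoc]
  · have h2 : dropA (dropG (Sum.inr b :: w)) = Sum.inr b' :: t := by simpa using h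
    have hw : w ≠ [] := by rintro rfl; simp at h
    obtain ⟨m, hm⟩ : ∃ m, w.length = m + 1 :=
      ⟨w.length - 1, by have := List.length_pos_iff.mpr hw; omega⟩
    have hlt : (Sum.inr b' :: t : List (A ⊕ A_G)).length ≤ m := by
      have := length_dAG_lt hw
      rw [h] at this
      omega
    rw [hMw, mid_succ_cons f evA _ _ _ _ h2, Mfun, hm, mid_succ_cons f evA _ _ _ _ h]
    rw [mid_norm f evA hE (by omega), mid_norm f evA hE (le_trans hlt (by omega))]
    simp only [dropG_inr, takeG_inr, evalW_cons, mul_assoc]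

include hE in
theorem M_inr (g : List A_G) (w : List (A ⊕ A_G)) :
    Mfun L f evA (g.map Sum.inr ++ w) =
      (evalW evA g * (Mfun L f evA w).1, (Mfun L f evA w).2) := by
  induction g with
  | nil => rw [evalW_nil]; simp
  | cons b g ih =>
      rw [List.map_cons, cons_append, M_inr1 f evA hE, ih, evalW_cons, mul_assoc]

include hE in
theorem M_term (u : List A) :
    Mfun L f evA (u.map Sum.inl) = (acuteG L f u, acuteWord L u) := by
  rcases eq_or_ne u [] with rfl | hu
  · rw [List.map_nil, M_nil f evA hE (A_G := A_G)]
    rw [acuteG_nil f hE, acuteWord_nil hE]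
  · obtain ⟨m, hm⟩ : ∃ m, (u.map (Sum.inl : A → A ⊕ A_G)).length = m + 1 :=
      ⟨u.length - 1, by have := List.length_pos_iff.mpr hu; simp; omega⟩
    have hda : dropA ((u.map (Sum.inl : A → A ⊕ A_G))) = [] :=
      dropA_map_inl u [] (Or.inl rfl) |>.symm ▸ by
        have := dropA_map_inl (A_G := A_G) u [] (Or.inl rfl)
        simpa using this
    have hdg : dropG ((u.map (Sum.inl : A → A ⊕ A_G))) = u.map Sum.inl := by
      cases u with
      | nil => rfl
      | cons a u' => rfl
    rw [Mfun, hm, mid_succ_nil f evA _ _ (by rw [hdg]; exact hda)]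
    rw [hdg]
    have hta : takeA ((u.map (Sum.inl : A → A ⊕ A_G))) = u := by
      have := takeA_map_inl (A_G := A_G) u [] (Or.inl rfl)
      simpa using this
    have htg : takeG ((u.map (Sum.inl : A → A ⊕ A_G))) = [] := by
      cases u with
      | nil => rfl
      | cons a u' => rfl
    rw [hta, htg, evalW_nil, one_mul]

include hE in
theorem M_inl (u : List A) (b : A_G) (t : List (A ⊕ A_G)) :
    Mfun L f evA (u.map Sum.inl ++ Sum.inr b :: t) =
      (fhat L f u * (Mfun L f evA (Sum.inr b :: t)).1, (Mfun L f evA (Sum.inr b :: t)).2) := by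
  rcases eq_or_ne u [] with rfl | hu
  · rw [fhat_nil f hE, one_mul]; simp
  · have hlen : (u.map (Sum.inl : A → A ⊕ A_G) ++ Sum.inr b :: t).length
        = (u.length + t.length) + 1 := by simp; omega
    have hdg : dropG (u.map (Sum.inl : A → A ⊕ A_G) ++ Sum.inr b :: t)
        = u.map Sum.inl ++ Sum.inr b :: t := by
      cases u with
      | nil => exact absurd rfl hu
      | cons a u' => rfl
    have htg : takeG (u.map (Sum.inl : A → A ⊕ A_G) ++ Sum.inr b :: t) = [] := by
      cases u with
      | nil => exact absurd rfl hu
      | cons a u' => rfl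
    have hda : dropA (u.map (Sum.inl : A → A ⊕ A_G) ++ Sum.inr b :: t) = Sum.inr b :: t :=
      dropA_map_inl u _ (Or.inr ⟨b, t, rfl⟩)
    have hta : takeA (u.map (Sum.inl : A → A ⊕ A_G) ++ Sum.inr b :: t) = u :=
      takeA_map_inl u _ (Or.inr ⟨b, t, rfl⟩)
    rw [Mfun, hlen, mid_succ_cons f evA _ _ _ _ (by rw [hdg]; exact hda)]
    rw [hdg, hta, htg, evalW_nil, one_mul]
    have hle : (Sum.inr b :: t : List (A ⊕ A_G)).length ≤ u.length + t.length := by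
      have := List.length_pos_iff.mpr hu
      simp
      omega
    rw [mid_norm f evA hE hle]

include hE hA in
theorem M_snd_or : ∀ (n : ℕ) (w : List (A ⊕ A_G)), w.length ≤ n →
    (Mfun L f evA w).2 ∈ L ∨ (Mfun L f evA w).2 = [] := by
  intro n
  induction n with
  | zero =>
      intro w hl
      have : w = [] := List.eq_nil_of_length_eq_zero (by omega)
      subst this
      rw [M_nil f evA hE]
      exact Or.inr rfl
  | succ n ih =>
      intro w hl
      have hdec : w = (takeG w).map Sum.inr ++ ((takeA (dropG w)).map Sum.inl ++ dropA (dropG w)) := by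
        conv_lhs => rw [← takeG_app_dropG w, ← takeA_app_dropA (dropG w)]
      rcases dropA_cases (dropG w) with h | ⟨b, t, h⟩
      · rw [hdec, h, append_nil, M_inr f evA hE, M_term f evA hE]
        exact acuteWord_mem_or hE hA _
      · rw [hdec, h, M_inr f evA hE, M_inl f evA hE]
        rcases eq_or_ne w [] with rfl | hw
        · simp at h
        · have hlt : (Sum.inr b :: t : List (A ⊕ A_G)).length ≤ n := by
            have := length_dAG_lt (A := A) (A_G := A_G) hw
            rw [h] at this
            omega
          exact ih _ hlt

end MidLayer
end SC

noncomputable def interiorG [Group G] (L : Set (List A)) (f : List A → G) (v : List A) : G :=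
  (((scL L v).tail.dropLast).map f).prod

namespace SC
section SplitLayer

theorem getLastD_of_tail {α} {l : List α} (h : l.tail ≠ []) (d : α) :
    l.getLastD d = l.tail.getLastD d := by
  cases l with
  | nil => exact absurd rfl h
  | cons a t =>
      rw [List.tail_cons] at h
      rw [List.getLastD_cons, List.tail_cons, getLastD_ne h]

theorem dropLast_ne {α} {l : List α} (h : l.tail ≠ []) : l.dropLast ≠ [] := by
  cases l with
  | nil => exact absurd rfl h
  | cons a t =>
      rw [List.tail_cons] at h
      rw [List.dropLast_cons_of_ne_nil h]
      simp

theorem headI_dropLast {α} [Inhabited α] {l : List α} (h : l.tail ≠ []) :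
    l.dropLast.headI = l.headI := by
  cases l with
  | nil => exact absurd rfl h
  | cons a t =>
      rw [List.tail_cons] at h
      rw [List.dropLast_cons_of_ne_nil h]
      rfl

theorem tail_dropLast' {α} (l : List α) : l.dropLast.tail = l.tail.dropLast := by
  cases l with
  | nil => rfl
  | cons a t =>
      cases t with
      | nil => rfl
      | cons b t' =>
          rw [List.dropLast_cons_of_ne_nil (by simp), List.tail_cons, List.tail_cons]

variable [Group G] {L : Set (List A)} (f : List A → G)
variable (hE : [] ∉ L)
  (hFac : ∀ u w : List A, w ∈ L → u ≠ [] → u <:+: w → u ∈ L)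
  (hA : ∀ a : A, [a] ∈ L)

include hE hFac hA in
theorem notL_appL {u : List A} (v : List A) (hu : u ≠ []) (huL : u ∉ L) : u ++ v ∉ L := by
  intro hc
  exact huL (hFac u (u ++ v) hc hu ⟨[], v, by simp⟩)

include hE hFac hA in
theorem notL_appR (u : List A) {v : List A} (hv : v ≠ []) (hvL : v ∉ L) : u ++ v ∉ L := by
  intro hc
  exact hvL (hFac v (u ++ v) hc hv ⟨u, [], by simp⟩)

include hE hFac hA in
theorem acuteWord_app_notR (u : List A) {v : List A} (hv : v ≠ []) (hvL : v ∉ L) :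
    acuteWord L (u ++ v) = acuteWord L v := by
  have htail := scL_tail_ne hE hA hv hvL
  have h7 : acuteWord L v = (scL L v).tail.getLastD [] := getLastD_of_tail htail []
  rw [h7, acuteWord, scL_glueR hE hFac hA, getLastD_app htail]

include hE hFac hA in
theorem acuteG_split (q : List A) {v : List A} (hv : v ≠ []) (hvL : v ∉ L) :
    acuteG L f (q ++ v) = fhat L f (q ++ graveWord L v) * interiorG L f v := by
  have htail := scL_tail_ne hE hA hv hvL
  show ((scL L (q ++ v)).dropLast.map f).prod = _
  rw [scL_glueR hE hFac hA, dropLast_app htail, List.map_append, List.prod_append]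
  rfl

include hE hFac hA in
theorem graveWord_app_notL {u : List A} (v : List A) (hu : u ≠ []) (huL : u ∉ L) :
    graveWord L (u ++ v) = graveWord L u := by
  have htail := scL_tail_ne hE hA hu huL
  show (scL L (u ++ v)).headI = (scL L u).headI
  rw [scL_glueL hE hFac hA, headI_app (dropLast_ne htail), headI_dropLast htail]

include hE hFac hA in
theorem graveG_app_notL {u : List A} (v : List A) (hu : u ≠ []) (huL : u ∉ L) :
    graveG L f (u ++ v) = interiorG L f u * fhat L f (acuteWord L u ++ v) := by
  have htail := scL_tail_ne hE hA hu huL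
  show ((scL L (u ++ v)).tail.map f).prod =
      (((scL L u).tail.dropLast).map f).prod * ((scL L ((scL L u).getLastD [] ++ v)).map f).prod
  rw [scL_glueL hE hFac hA, tail_app (dropLast_ne htail), List.map_append, List.prod_append,
    tail_dropLast']

include hE hFac hA in
theorem interior_split {u : List A} {v : List A} (hu : u ≠ []) (hv : v ≠ []) (hvL : v ∉ L) :
    interiorG L f (u ++ v) = graveG L f (u ++ graveWord L v) * interiorG L f v := by
  have htail := scL_tail_ne hE hA hv hvL
  have hne : scL L (u ++ (scL L v).headI) ≠ [] :=
    scL_ne_nil hA (by intro hc; rw [List.append_eq_nil_iff] at hc; exact hu hc.1)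
  show (((scL L (u ++ v)).tail.dropLast).map f).prod =
      ((scL L (u ++ (scL L v).headI)).tail.map f).prod * (((scL L v).tail.dropLast).map f).prod
  rw [scL_glueR hE hFac hA, tail_app hne, dropLast_app htail, List.map_append, List.prod_append]

include hE hFac hA in
theorem interior_appL {u : List A} (hu : u ≠ []) (huL : u ∉ L) {v : List A} (hv : v ≠ []) :
    interiorG L f (u ++ v) = interiorG L f u * acuteG L f (acuteWord L u ++ v) := by
  have htail := scL_tail_ne hE hA hu huL
  have hne : scL L ((scL L u).getLastD [] ++ v) ≠ [] :=
    scL_ne_nil hA (by intro hc; rw [List.append_eq_nil_iff] at hc; exact hv hc.2)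
  show (((scL L (u ++ v)).tail.dropLast).map f).prod =
      (((scL L u).tail.dropLast).map f).prod *
        ((scL L ((scL L u).getLastD [] ++ v)).dropLast.map f).prod
  rw [scL_glueL hE hFac hA, tail_app (dropLast_ne htail), dropLast_app hne,
    List.map_append, List.prod_append, tail_dropLast']

end SplitLayer

section CheckLayer
variable [Group G] {L : Set (List A)} (f : List A → G) (evA : A_G → G) (rep : G → List A_G)
variable (hE : [] ∉ L)
  (hFac : ∀ u w : List A, w ∈ L → u ≠ [] → u <:+: w → u ∈ L)
  (hA : ∀ a : A, [a] ∈ L)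
  (hrepne : ∀ g : G, rep g ≠ [])
  (hrep : ∀ g : G, evalW evA (rep g) = g)

theorem checkOfSeq_single (u : List A) :
    checkOfSeq (A_G := A_G) f rep [u] = u.map Sum.inl := rfl

theorem checkOfSeq_cons (x y : List A) (r : List (List A)) :
    checkOfSeq (A_G := A_G) f rep (x :: y :: r) =
      x.map Sum.inl ++ (rep (((y :: r).dropLast.map f).prod)).map Sum.inr ++
        ((y :: r).getLastD []).map Sum.inl := rfl

theorem fcheck_pure (w : List (A ⊕ A_G)) (h : dropA w = []) :
    fcheckX L f evA rep w = checkOfSeq f rep (scL L (takeA w)) := by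
  simp only [fcheckX]
  rw [h]

theorem fcheck_mixed (w : List (A ⊕ A_G)) (b : A_G) (t : List (A ⊕ A_G))
    (h : dropA w = Sum.inr b :: t) :
    fcheckX L f evA rep w =
      (graveWord L (takeA w)).map Sum.inl ++
        (rep (graveG L f (takeA w) * (Mfun L f evA (Sum.inr b :: t)).1)).map Sum.inr ++
        (Mfun L f evA (Sum.inr b :: t)).2.map Sum.inl := by
  simp only [fcheckX]
  rw [h]
  rfl

theorem dropA_map_inl0 (u : List A) : dropA ((u.map Sum.inl : List (A ⊕ A_G))) = [] := by
  have := dropA_map_inl (A_G := A_G) u [] (Or.inl rfl)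
  simpa using this

theorem takeA_map_inl0 (u : List A) : takeA ((u.map Sum.inl : List (A ⊕ A_G))) = u := by
  have := takeA_map_inl (A_G := A_G) u [] (Or.inl rfl)
  simpa using this

include hE hFac hA in
theorem fcheck_pure_mem {u : List A} (hu : u ∈ L) :
    fcheckX L f evA rep (u.map Sum.inl) = u.map Sum.inl := by
  rw [fcheck_pure f evA rep _ (dropA_map_inl0 u), takeA_map_inl0,
    scL_mem hE hFac hA hu, checkOfSeq_single]

include hE hFac hA in
theorem fcheck_pure_not {u : List A} (hu : u ≠ []) (huL : u ∉ L) :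
    fcheckX L f evA rep (u.map Sum.inl) =
      (graveWord L u).map Sum.inl ++ (rep (interiorG L f u)).map Sum.inr ++
        (acuteWord L u).map Sum.inl := by
  rw [fcheck_pure f evA rep _ (dropA_map_inl0 u), takeA_map_inl0]
  have htail := scL_tail_ne hE hA hu huL
  obtain ⟨y, r, hyr⟩ := List.exists_cons_of_ne_nil htail
  have hs : scL L u = graveWord L u :: y :: r := by
    rw [← hyr]
    exact (headI_tail (scL_ne_nil hA hu)).symm
  rw [hs, checkOfSeq_cons, ← hyr]
  have h7 : acuteWord L u = (scL L u).tail.getLastD [] := getLastD_of_tail htail []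
  rw [h7]
  rfl

include hE hFac hA hrepne hrep in
theorem fix_triple (p q : List A) (hp : p ∈ L ∨ p = []) (hq : q ∈ L ∨ q = []) (h : G) :
    fcheckX L f evA rep (p.map Sum.inl ++ (rep h).map Sum.inr ++ q.map Sum.inl)
      = p.map Sum.inl ++ (rep h).map Sum.inr ++ q.map Sum.inl := by
  obtain ⟨b, t, hbt⟩ := map_inr_cons (rep h) (hrepne h) (q.map Sum.inl)
  have hda : dropA (p.map Sum.inl ++ ((rep h).map Sum.inr ++ q.map Sum.inl)) = Sum.inr b :: t := by
    rw [dropA_map_inl p _ (Or.inr ⟨b, t, hbt⟩)]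
    exact hbt
  have hta : takeA (p.map Sum.inl ++ ((rep h).map Sum.inr ++ q.map Sum.inl)) = p :=
    takeA_map_inl p _ (Or.inr ⟨b, t, hbt⟩)
  rw [append_assoc, fcheck_mixed f evA rep _ _ _ hda, hta, ← hbt,
    M_inr f evA hE, M_term f evA hE,
    graveWord_L1 hE hFac hA hp, graveG_L1 f hE hFac hA hp]
  show p.map Sum.inl ++ (rep (1 * (evalW evA (rep h) * acuteG L f q))).map Sum.inr ++
      (acuteWord L q).map Sum.inl = _
  rw [hrep h, acuteG_L1 f hE hFac hA hq, acuteWord_L1 hE hFac hA hq, mul_one, one_mul,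
    append_assoc]

end CheckLayer
end SC

noncomputable def thetaz [Group G] (L : Set (List A)) (f : List A → G) (evA : A_G → G)
    (q : List A) (z : List (A ⊕ A_G)) : G :=
  match dropA z with
  | [] => acuteG L f (q ++ takeA z)
  | r => fhat L f (q ++ graveWord L (takeA z)) * graveG L f (takeA z) * (Mfun L f evA r).1

noncomputable def phiz [Group G] (L : Set (List A)) (f : List A → G) (evA : A_G → G)
    (q : List A) (z : List (A ⊕ A_G)) : List A :=
  match dropA z with
  | [] => acuteWord L (q ++ takeA z)
  | r => (Mfun L f evA r).2

namespace SC
section AppLayer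
variable [Group G] {L : Set (List A)} (f : List A → G) (evA : A_G → G) (rep : G → List A_G)
variable (hE : [] ∉ L)
  (hFac : ∀ u w : List A, w ∈ L → u ≠ [] → u <:+: w → u ∈ L)
  (hA : ∀ a : A, [a] ∈ L)
  (hrepne : ∀ g : G, rep g ≠ [])
  (hrep : ∀ g : G, evalW evA (rep g) = g)

theorem thetaz_nil (q : List A) {z : List (A ⊕ A_G)} (h : dropA z = []) :
    thetaz L f evA q z = acuteG L f (q ++ takeA z) := by
  simp only [thetaz]
  rw [h]

theorem thetaz_cons (q : List A) {z : List (A ⊕ A_G)} {x : A ⊕ A_G} {t : List (A ⊕ A_G)}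
    (h : dropA z = x :: t) :
    thetaz L f evA q z = fhat L f (q ++ graveWord L (takeA z)) * graveG L f (takeA z) *
      (Mfun L f evA (x :: t)).1 := by
  simp only [thetaz]
  rw [h]

theorem phiz_nil (q : List A) {z : List (A ⊕ A_G)} (h : dropA z = []) :
    phiz L f evA q z = acuteWord L (q ++ takeA z) := by
  simp only [phiz]
  rw [h]

theorem phiz_cons (q : List A) {z : List (A ⊕ A_G)} {x : A ⊕ A_G} {t : List (A ⊕ A_G)}
    (h : dropA z = x :: t) :
    phiz L f evA q z = (Mfun L f evA (x :: t)).2 := by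
  simp only [phiz]
  rw [h]

include hE hFac hA in
theorem M_app : ∀ (n : ℕ) (r : List (A ⊕ A_G)) (b : A_G) (t : List (A ⊕ A_G)),
    r = Sum.inr b :: t → r.length ≤ n → ∀ z : List (A ⊕ A_G), z ≠ [] →
    Mfun L f evA (r ++ z) =
      ((Mfun L f evA r).1 * thetaz L f evA (Mfun L f evA r).2 z,
        phiz L f evA (Mfun L f evA r).2 z) := by
  intro n
  induction n with
  | zero =>
      intro r b t hr hlen
      subst hr
      simp at hlen
  | succ n ih =>
      intro r b t hr hlen z hz
      have hrne : r ≠ [] := by rw [hr]; simp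
      have hdec : r = (takeG r).map Sum.inr ++
          ((takeA (dropG r)).map Sum.inl ++ dropA (dropG r)) := by
        conv_lhs => rw [← takeG_app_dropG r, ← takeA_app_dropA (dropG r)]
      rcases dropA_cases (dropG r) with h2 | ⟨b₂, t₂, h2⟩
      · -- r = g ++ u, terminal block
        have hdec' : r = (takeG r).map Sum.inr ++ (takeA (dropG r)).map Sum.inl := by
          conv_lhs => rw [hdec]
          rw [h2, append_nil]
        have hMr : Mfun L f evA r =
            (evalW evA (takeG r) * acuteG L f (takeA (dropG r)),
              acuteWord L (takeA (dropG r))) := by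
          conv_lhs => rw [hdec']
          rw [M_inr f evA hE, M_term f evA hE]
        rcases dropA_cases z with hz2 | ⟨b', t', hz2⟩
        · -- z pure
          have hzeq : z = (takeA z).map Sum.inl := by
            conv_lhs => rw [← takeA_app_dropA z, hz2, append_nil]
          have hv : takeA z ≠ [] := by
            intro hc
            apply hz
            rw [hzeq, hc]
            rfl
          have hrz : r ++ z = (takeG r).map Sum.inr ++
              ((takeA (dropG r) ++ takeA z).map Sum.inl) := by
            conv_lhs => rw [hdec', hzeq]
            rw [List.map_append, append_assoc]
          rw [hrz, M_inr f evA hE, M_term f evA hE, hMr]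
          rw [thetaz_nil f evA _ hz2, phiz_nil f evA _ hz2]
          rw [acuteG_app f hE hFac hA _ hv, acuteWord_app hE hFac hA _ hv, mul_assoc]
        · -- z mixed
          have hzeq : z = (takeA z).map Sum.inl ++ (Sum.inr b' :: t') := by
            conv_lhs => rw [← takeA_app_dropA z, hz2]
          have hrz : r ++ z = (takeG r).map Sum.inr ++
              ((takeA (dropG r) ++ takeA z).map Sum.inl ++ (Sum.inr b' :: t')) := by
            conv_lhs => rw [hdec', hzeq]
            rw [List.map_append, append_assoc, append_assoc]
          rw [hrz, M_inr f evA hE, M_inl f evA hE, hMr]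
          rw [thetaz_cons f evA _ hz2, phiz_cons f evA _ hz2]
          rw [fhat_appL f hE hFac hA, fhat_appR f hE hFac hA]
          simp only [mul_assoc]
      · -- r has another group block
        have hr2len : (Sum.inr b₂ :: t₂ : List (A ⊕ A_G)).length ≤ n := by
          have := length_dAG_lt hrne
          rw [h2] at this
          omega
        have hu2 : takeA (dropG r) ≠ [] := by
          intro hc
          rcases dropG_cases r with hg | ⟨a, t₃, hg⟩
          · rw [hg] at h2; simp at h2
          · rw [hg] at hc; simp at hc
        have hMr : Mfun L f evA r =
            (evalW evA (takeG r) * (fhat L f (takeA (dropG r)) *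
              (Mfun L f evA (Sum.inr b₂ :: t₂)).1),
              (Mfun L f evA (Sum.inr b₂ :: t₂)).2) := by
          conv_lhs => rw [hdec]
          rw [h2, M_inr f evA hE, M_inl f evA hE]
        have hrz : r ++ z = (takeG r).map Sum.inr ++
            ((takeA (dropG r)).map Sum.inl ++ (Sum.inr b₂ :: (t₂ ++ z))) := by
          conv_lhs => rw [hdec]
          rw [h2]
          simp [append_assoc]
        have hih := ih (Sum.inr b₂ :: t₂) b₂ t₂ rfl hr2len z hz
        rw [hrz, M_inr f evA hE, M_inl f evA hE]
        have hcons : (Sum.inr b₂ :: (t₂ ++ z) : List (A ⊕ A_G)) = (Sum.inr b₂ :: t₂) ++ z := rfl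
        rw [hcons, hih, hMr]
        simp only [mul_assoc]

include hE hFac hA hrepne hrep in
theorem M_rhs (q : List A) (hq : q ∈ L ∨ q = []) (h : G) (z : List (A ⊕ A_G)) (hz : z ≠ []) :
    Mfun L f evA ((rep h).map Sum.inr ++ (q.map Sum.inl ++ fcheckX L f evA rep z)) =
      (h * thetaz L f evA q z, phiz L f evA q z) := by
  rcases dropA_cases z with hz2 | ⟨b, t, hz2⟩
  · -- z pure
    have hzeq : z = (takeA z).map Sum.inl := by
      conv_lhs => rw [← takeA_app_dropA z, hz2, append_nil]
    have hv : takeA z ≠ [] := by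
      intro hc
      apply hz
      rw [hzeq, hc]
      rfl
    rw [thetaz_nil f evA _ hz2, phiz_nil f evA _ hz2]
    by_cases hvL : takeA z ∈ L
    · have hfz : fcheckX L f evA rep z = (takeA z).map Sum.inl := by
        conv_lhs => rw [hzeq]
        exact fcheck_pure_mem f evA rep hE hFac hA hvL
      rw [hfz, ← List.map_append, M_inr f evA hE, M_term f evA hE, hrep h]
    · have hfz : fcheckX L f evA rep z =
          (graveWord L (takeA z)).map Sum.inl ++
            (rep (interiorG L f (takeA z))).map Sum.inr ++
            (acuteWord L (takeA z)).map Sum.inl := by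
        conv_lhs => rw [hzeq]
        exact fcheck_pure_not f evA rep hE hFac hA hv hvL
      obtain ⟨c, g', hcg⟩ := map_inr_cons (rep (interiorG L f (takeA z))) (hrepne _)
        ((acuteWord L (takeA z)).map Sum.inl)
      have hawm : acuteWord L (takeA z) ∈ L := scL_last_mem hE hA hv
      have hword : q.map (Sum.inl : A → A ⊕ A_G) ++
          ((graveWord L (takeA z)).map Sum.inl ++
            (rep (interiorG L f (takeA z))).map Sum.inr ++
            (acuteWord L (takeA z)).map Sum.inl) =
          (q ++ graveWord L (takeA z)).map Sum.inl ++ (Sum.inr c :: g') := by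
        rw [List.map_append, ← hcg]
        simp [append_assoc]
      rw [hfz, hword, M_inr f evA hE, M_inl f evA hE, ← hcg,
        M_inr f evA hE, M_term f evA hE, hrep h, hrep _,
        acuteG_memL f hE hFac hA hawm, acuteWord_memL hE hFac hA hawm,
        acuteG_split f hE hFac hA q hv hvL,
        acuteWord_app_notR hE hFac hA q hv hvL, mul_one]
  · -- z mixed
    rw [thetaz_cons f evA _ hz2, phiz_cons f evA _ hz2]
    rw [fcheck_mixed f evA rep z b t hz2]
    have hqz : (Mfun L f evA (Sum.inr b :: t)).2 ∈ L ∨ (Mfun L f evA (Sum.inr b :: t)).2 = [] :=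
      M_snd_or f evA hE hA _ _ le_rfl
    obtain ⟨c, g', hcg⟩ := map_inr_cons
      (rep (graveG L f (takeA z) * (Mfun L f evA (Sum.inr b :: t)).1)) (hrepne _)
      ((Mfun L f evA (Sum.inr b :: t)).2.map Sum.inl)
    have hword : q.map (Sum.inl : A → A ⊕ A_G) ++
        ((graveWord L (takeA z)).map Sum.inl ++
          (rep (graveG L f (takeA z) * (Mfun L f evA (Sum.inr b :: t)).1)).map Sum.inr ++
          (Mfun L f evA (Sum.inr b :: t)).2.map Sum.inl) =
        (q ++ graveWord L (takeA z)).map Sum.inl ++ (Sum.inr c :: g') := by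
      rw [List.map_append, ← hcg]
      simp [append_assoc]
    rw [hword, M_inr f evA hE, M_inl f evA hE, ← hcg,
      M_inr f evA hE, M_term f evA hE, hrep h, hrep _,
      acuteG_L1 f hE hFac hA hqz, acuteWord_L1 hE hFac hA hqz, mul_one]
    simp only [mul_assoc]

end AppLayer
end SC

namespace SC
section MainLayer
variable [Group G] {L : Set (List A)} (f : List A → G) (evA : A_G → G) (rep : G → List A_G)
variable (hE : [] ∉ L)
  (hFac : ∀ u w : List A, w ∈ L → u ≠ [] → u <:+: w → u ∈ L)
  (hA : ∀ a : A, [a] ∈ L)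
  (hrepne : ∀ g : G, rep g ≠ [])
  (hrep : ∀ g : G, evalW evA (rep g) = g)

include hE hrepne hrep in
theorem fcheck_triple (p q : List A) (g : G) :
    fcheckX L f evA rep (p.map Sum.inl ++ (rep g).map Sum.inr ++ q.map Sum.inl) =
      (graveWord L p).map Sum.inl ++
        (rep (graveG L f p * (g * acuteG L f q))).map Sum.inr ++
        (acuteWord L q).map Sum.inl := by
  obtain ⟨b, t, hbt⟩ := map_inr_cons (rep g) (hrepne g) (q.map Sum.inl)
  have hda : dropA (p.map Sum.inl ++ ((rep g).map Sum.inr ++ q.map Sum.inl)) = Sum.inr b :: t := by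
    rw [dropA_map_inl p _ (Or.inr ⟨b, t, hbt⟩)]
    exact hbt
  have hta : takeA (p.map Sum.inl ++ ((rep g).map Sum.inr ++ q.map Sum.inl)) = p :=
    takeA_map_inl p _ (Or.inr ⟨b, t, hbt⟩)
  rw [append_assoc, fcheck_mixed f evA rep _ _ _ hda, hta, ← hbt,
    M_inr f evA hE, M_term f evA hE, hrep g]

include hE hrepne hrep in
theorem fcheck_quad (p m q : List A) (g₁ g₂ : G) :
    fcheckX L f evA rep (p.map Sum.inl ++ (rep g₁).map Sum.inr ++ m.map Sum.inl ++
        (rep g₂).map Sum.inr ++ q.map Sum.inl) =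
      (graveWord L p).map Sum.inl ++
        (rep (graveG L f p * (g₁ * (fhat L f m * (g₂ * acuteG L f q))))).map Sum.inr ++
        (acuteWord L q).map Sum.inl := by
  obtain ⟨b₂, t₂, hbt₂⟩ := map_inr_cons (rep g₂) (hrepne g₂) (q.map Sum.inl)
  obtain ⟨b₁, t₁, hbt₁⟩ := map_inr_cons (rep g₁) (hrepne g₁)
    (m.map Sum.inl ++ ((rep g₂).map Sum.inr ++ q.map Sum.inl))
  have hassoc : p.map (Sum.inl : A → A ⊕ A_G) ++ (rep g₁).map Sum.inr ++ m.map Sum.inl ++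
      (rep g₂).map Sum.inr ++ q.map Sum.inl =
      p.map Sum.inl ++ ((rep g₁).map Sum.inr ++
        (m.map Sum.inl ++ ((rep g₂).map Sum.inr ++ q.map Sum.inl))) := by
    simp [append_assoc]
  have hda : dropA (p.map Sum.inl ++ ((rep g₁).map Sum.inr ++
      (m.map Sum.inl ++ ((rep g₂).map Sum.inr ++ q.map Sum.inl)))) = Sum.inr b₁ :: t₁ := by
    rw [dropA_map_inl p _ (Or.inr ⟨b₁, t₁, hbt₁⟩)]
    exact hbt₁
  have hta : takeA (p.map Sum.inl ++ ((rep g₁).map Sum.inr ++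
      (m.map Sum.inl ++ ((rep g₂).map Sum.inr ++ q.map Sum.inl)))) = p :=
    takeA_map_inl p _ (Or.inr ⟨b₁, t₁, hbt₁⟩)
  rw [hassoc, fcheck_mixed f evA rep _ _ _ hda, hta, ← hbt₁, M_inr f evA hE, hbt₂,
    M_inl f evA hE, ← hbt₂, M_inr f evA hE, M_term f evA hE, hrep g₁, hrep g₂]

include hE hFac hA hrepne hrep in
theorem main_idem (w : List (A ⊕ A_G)) (hw : w ≠ []) :
    fcheckX L f evA rep (fcheckX L f evA rep w) = fcheckX L f evA rep w := by
  rcases dropA_cases w with h | ⟨b, t, h⟩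
  · have hweq : w = (takeA w).map Sum.inl := by
      conv_lhs => rw [← takeA_app_dropA w, h, append_nil]
    have hu : takeA w ≠ [] := by
      intro hc
      apply hw
      rw [hweq, hc]
      rfl
    by_cases huL : takeA w ∈ L
    · have hfw : fcheckX L f evA rep w = (takeA w).map Sum.inl := by
        conv_lhs => rw [hweq]
        exact fcheck_pure_mem f evA rep hE hFac hA huL
      rw [hfw]
      exact fcheck_pure_mem f evA rep hE hFac hA huL
    · have hfw : fcheckX L f evA rep w =
          (graveWord L (takeA w)).map Sum.inl ++
            (rep (interiorG L f (takeA w))).map Sum.inr ++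
            (acuteWord L (takeA w)).map Sum.inl := by
        conv_lhs => rw [hweq]
        exact fcheck_pure_not f evA rep hE hFac hA hu huL
      rw [hfw]
      exact fix_triple f evA rep hE hFac hA hrepne hrep _ _
        (Or.inl (scL_head_mem hE hA hu)) (Or.inl (scL_last_mem hE hA hu)) _
  · rw [fcheck_mixed f evA rep w b t h]
    exact fix_triple f evA rep hE hFac hA hrepne hrep _ _
      (graveWord_mem_or hE hA _) (M_snd_or f evA hE hA _ _ le_rfl) _

include hE hFac hA hrepne hrep in
theorem main_append (w z : List (A ⊕ A_G)) (hw : w ≠ []) (hz : z ≠ []) :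
    fcheckX L f evA rep (w ++ z) =
      fcheckX L f evA rep (fcheckX L f evA rep w ++ fcheckX L f evA rep z) := by
  rcases dropA_cases w with hwa | ⟨bw, tw, hwa⟩
  · -- w pure
    have hweq : w = (takeA w).map Sum.inl := by
      conv_lhs => rw [← takeA_app_dropA w, hwa, append_nil]
    have hu : takeA w ≠ [] := by
      intro hc; apply hw; rw [hweq, hc]; rfl
    rcases dropA_cases z with hza | ⟨bz, tz, hza⟩
    · -- z pure
      have hzeq : z = (takeA z).map Sum.inl := by
        conv_lhs => rw [← takeA_app_dropA z, hza, append_nil]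
      have hv : takeA z ≠ [] := by
        intro hc; apply hz; rw [hzeq, hc]; rfl
      have hwz : w ++ z = (takeA w ++ takeA z).map Sum.inl := by
        conv_lhs => rw [hweq, hzeq]
        rw [List.map_append]
      by_cases huL : takeA w ∈ L <;> by_cases hvL : takeA z ∈ L
      · -- both in L
        have hfw : fcheckX L f evA rep w = (takeA w).map Sum.inl := by
          conv_lhs => rw [hweq]
          exact fcheck_pure_mem f evA rep hE hFac hA huL
        have hfz : fcheckX L f evA rep z = (takeA z).map Sum.inl := by
          conv_lhs => rw [hzeq]
          exact fcheck_pure_mem f evA rep hE hFac hA hvL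
        rw [hfw, hfz, hwz, ← List.map_append]
      · -- u ∈ L, v ∉ L
        have hfw : fcheckX L f evA rep w = (takeA w).map Sum.inl := by
          conv_lhs => rw [hweq]
          exact fcheck_pure_mem f evA rep hE hFac hA huL
        have hfz : fcheckX L f evA rep z =
            (graveWord L (takeA z)).map Sum.inl ++
              (rep (interiorG L f (takeA z))).map Sum.inr ++
              (acuteWord L (takeA z)).map Sum.inl := by
          conv_lhs => rw [hzeq]
          exact fcheck_pure_not f evA rep hE hFac hA hv hvL
        have hnotL : takeA w ++ takeA z ∉ L := notL_appR hE hFac hA _ hv hvL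
        have hne : takeA w ++ takeA z ≠ [] := by
          intro hc; rw [List.append_eq_nil_iff] at hc; exact hu hc.1
        have hrw : fcheckX L f evA rep w ++ fcheckX L f evA rep z =
            (takeA w ++ graveWord L (takeA z)).map Sum.inl ++
              (rep (interiorG L f (takeA z))).map Sum.inr ++
              (acuteWord L (takeA z)).map Sum.inl := by
          rw [hfw, hfz, List.map_append]
          simp [append_assoc]
        rw [hwz, fcheck_pure_not f evA rep hE hFac hA hne hnotL, hrw,
          fcheck_triple f evA rep hE hrepne hrep,
          graveWord_app hE hFac hA _ hu,
          acuteWord_app_notR hE hFac hA _ hv hvL,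
          interior_split f hE hFac hA hu hv hvL,
          acuteG_memL f hE hFac hA (show acuteWord L (takeA z) ∈ L from scL_last_mem hE hA hv),
          acuteWord_memL hE hFac hA (show acuteWord L (takeA z) ∈ L from scL_last_mem hE hA hv), mul_one]
      · -- u ∉ L, v ∈ L
        have hfw : fcheckX L f evA rep w =
            (graveWord L (takeA w)).map Sum.inl ++
              (rep (interiorG L f (takeA w))).map Sum.inr ++
              (acuteWord L (takeA w)).map Sum.inl := by
          conv_lhs => rw [hweq]
          exact fcheck_pure_not f evA rep hE hFac hA hu huL
        have hfz : fcheckX L f evA rep z = (takeA z).map Sum.inl := by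
          conv_lhs => rw [hzeq]
          exact fcheck_pure_mem f evA rep hE hFac hA hvL
        have hnotL : takeA w ++ takeA z ∉ L := notL_appL hE hFac hA _ hu huL
        have hne : takeA w ++ takeA z ≠ [] := by
          intro hc; rw [List.append_eq_nil_iff] at hc; exact hu hc.1
        have hrw : fcheckX L f evA rep w ++ fcheckX L f evA rep z =
            (graveWord L (takeA w)).map Sum.inl ++
              (rep (interiorG L f (takeA w))).map Sum.inr ++
              (acuteWord L (takeA w) ++ takeA z).map Sum.inl := by
          rw [hfw, hfz, List.map_append]
          simp [append_assoc]
        rw [hwz, fcheck_pure_not f evA rep hE hFac hA hne hnotL, hrw,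
          fcheck_triple f evA rep hE hrepne hrep,
          graveWord_app_notL hE hFac hA _ hu huL,
          graveWord_memL hE hFac hA (show graveWord L (takeA w) ∈ L from scL_head_mem hE hA hu),
          graveG_memL f hE hFac hA (show graveWord L (takeA w) ∈ L from scL_head_mem hE hA hu),
          acuteWord_app hE hFac hA _ hv,
          interior_appL f hE hFac hA hu huL hv, one_mul]
      · -- u ∉ L, v ∉ L
        have hfw : fcheckX L f evA rep w =
            (graveWord L (takeA w)).map Sum.inl ++
              (rep (interiorG L f (takeA w))).map Sum.inr ++
              (acuteWord L (takeA w)).map Sum.inl := by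
          conv_lhs => rw [hweq]
          exact fcheck_pure_not f evA rep hE hFac hA hu huL
        have hfz : fcheckX L f evA rep z =
            (graveWord L (takeA z)).map Sum.inl ++
              (rep (interiorG L f (takeA z))).map Sum.inr ++
              (acuteWord L (takeA z)).map Sum.inl := by
          conv_lhs => rw [hzeq]
          exact fcheck_pure_not f evA rep hE hFac hA hv hvL
        have hnotL : takeA w ++ takeA z ∉ L := notL_appL hE hFac hA _ hu huL
        have hne : takeA w ++ takeA z ≠ [] := by
          intro hc; rw [List.append_eq_nil_iff] at hc; exact hu hc.1
        have hrw : fcheckX L f evA rep w ++ fcheckX L f evA rep z =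
            (graveWord L (takeA w)).map Sum.inl ++
              (rep (interiorG L f (takeA w))).map Sum.inr ++
              (acuteWord L (takeA w) ++ graveWord L (takeA z)).map Sum.inl ++
              (rep (interiorG L f (takeA z))).map Sum.inr ++
              (acuteWord L (takeA z)).map Sum.inl := by
          rw [hfw, hfz, List.map_append]
          simp [append_assoc]
        rw [hwz, fcheck_pure_not f evA rep hE hFac hA hne hnotL, hrw,
          fcheck_quad f evA rep hE hrepne hrep,
          graveWord_app_notL hE hFac hA _ hu huL,
          graveWord_memL hE hFac hA (show graveWord L (takeA w) ∈ L from scL_head_mem hE hA hu),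
          graveG_memL f hE hFac hA (show graveWord L (takeA w) ∈ L from scL_head_mem hE hA hu),
          acuteWord_app_notR hE hFac hA _ hv hvL,
          acuteG_memL f hE hFac hA (show acuteWord L (takeA z) ∈ L from scL_last_mem hE hA hv),
          acuteWord_memL hE hFac hA (show acuteWord L (takeA z) ∈ L from scL_last_mem hE hA hv),
          interior_appL f hE hFac hA hu huL hv,
          acuteG_split f hE hFac hA _ hv hvL, one_mul, mul_one]
    · -- z mixed
      obtain ⟨h1, h2⟩ := takeA_append_nil (w := w) z hwa
      rw [fcheck_mixed f evA rep (w ++ z) bz tz (by rw [h2]; exact hza), h1]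
      rw [fcheck_mixed f evA rep z bz tz hza]
      have hqz : (Mfun L f evA (Sum.inr bz :: tz)).2 ∈ L ∨
          (Mfun L f evA (Sum.inr bz :: tz)).2 = [] := M_snd_or f evA hE hA _ _ le_rfl
      by_cases huL : takeA w ∈ L
      · have hfw : fcheckX L f evA rep w = (takeA w).map Sum.inl := by
          conv_lhs => rw [hweq]
          exact fcheck_pure_mem f evA rep hE hFac hA huL
        have hrw : fcheckX L f evA rep w ++
            ((graveWord L (takeA z)).map Sum.inl ++
              (rep (graveG L f (takeA z) * (Mfun L f evA (Sum.inr bz :: tz)).1)).map Sum.inr ++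
              (Mfun L f evA (Sum.inr bz :: tz)).2.map Sum.inl) =
            (takeA w ++ graveWord L (takeA z)).map Sum.inl ++
              (rep (graveG L f (takeA z) * (Mfun L f evA (Sum.inr bz :: tz)).1)).map Sum.inr ++
              (Mfun L f evA (Sum.inr bz :: tz)).2.map Sum.inl := by
          rw [hfw, List.map_append]
          simp [append_assoc]
        rw [hrw, fcheck_triple f evA rep hE hrepne hrep,
          graveWord_app hE hFac hA _ hu,
          graveG_app f hE hFac hA _ hu,
          acuteG_L1 f hE hFac hA hqz, acuteWord_L1 hE hFac hA hqz, mul_one, mul_assoc]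
      · have hfw : fcheckX L f evA rep w =
            (graveWord L (takeA w)).map Sum.inl ++
              (rep (interiorG L f (takeA w))).map Sum.inr ++
              (acuteWord L (takeA w)).map Sum.inl := by
          conv_lhs => rw [hweq]
          exact fcheck_pure_not f evA rep hE hFac hA hu huL
        have hrw : fcheckX L f evA rep w ++
            ((graveWord L (takeA z)).map Sum.inl ++
              (rep (graveG L f (takeA z) * (Mfun L f evA (Sum.inr bz :: tz)).1)).map Sum.inr ++
              (Mfun L f evA (Sum.inr bz :: tz)).2.map Sum.inl) =
            (graveWord L (takeA w)).map Sum.inl ++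
              (rep (interiorG L f (takeA w))).map Sum.inr ++
              (acuteWord L (takeA w) ++ graveWord L (takeA z)).map Sum.inl ++
              (rep (graveG L f (takeA z) * (Mfun L f evA (Sum.inr bz :: tz)).1)).map Sum.inr ++
              (Mfun L f evA (Sum.inr bz :: tz)).2.map Sum.inl := by
          rw [hfw, List.map_append]
          simp [append_assoc]
        rw [hrw, fcheck_quad f evA rep hE hrepne hrep,
          graveWord_app_notL hE hFac hA _ hu huL,
          graveWord_memL hE hFac hA (show graveWord L (takeA w) ∈ L from scL_head_mem hE hA hu),
          graveG_memL f hE hFac hA (show graveWord L (takeA w) ∈ L from scL_head_mem hE hA hu),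
          acuteG_L1 f hE hFac hA hqz, acuteWord_L1 hE hFac hA hqz,
          graveG_app_notL f hE hFac hA _ hu huL,
          fhat_appR f hE hFac hA, one_mul, mul_one]
        simp only [mul_assoc]
  · -- w mixed
    obtain ⟨h1, h2⟩ := takeA_append_cons (w := w) z hwa
    rw [fcheck_mixed f evA rep (w ++ z) bw (tw ++ z) h2, h1]
    have hcons : (Sum.inr bw :: (tw ++ z) : List (A ⊕ A_G)) = (Sum.inr bw :: tw) ++ z := rfl
    rw [hcons, M_app f evA hE hFac hA (Sum.inr bw :: tw).length _ bw tw rfl le_rfl z hz]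
    rw [fcheck_mixed f evA rep w bw tw hwa]
    have hqw : (Mfun L f evA (Sum.inr bw :: tw)).2 ∈ L ∨
        (Mfun L f evA (Sum.inr bw :: tw)).2 = [] := M_snd_or f evA hE hA _ _ le_rfl
    obtain ⟨c, g', hcg⟩ := map_inr_cons
      (rep (graveG L f (takeA w) * (Mfun L f evA (Sum.inr bw :: tw)).1)) (hrepne _)
      ((Mfun L f evA (Sum.inr bw :: tw)).2.map Sum.inl ++ fcheckX L f evA rep z)
    have hrw : (graveWord L (takeA w)).map Sum.inl ++
        (rep (graveG L f (takeA w) * (Mfun L f evA (Sum.inr bw :: tw)).1)).map Sum.inr ++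
        (Mfun L f evA (Sum.inr bw :: tw)).2.map Sum.inl ++ fcheckX L f evA rep z =
        (graveWord L (takeA w)).map Sum.inl ++ (Sum.inr c :: g') := by
      rw [← hcg]
      simp [append_assoc]
    have hda : dropA ((graveWord L (takeA w)).map Sum.inl ++ (Sum.inr c :: g')) =
        Sum.inr c :: g' := dropA_map_inl _ _ (Or.inr ⟨c, g', rfl⟩)
    have hta : takeA ((graveWord L (takeA w)).map Sum.inl ++ (Sum.inr c :: g')) =
        graveWord L (takeA w) := takeA_map_inl _ _ (Or.inr ⟨c, g', rfl⟩)
    rw [hrw, fcheck_mixed f evA rep _ _ _ hda, hta, ← hcg]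
    have hmr := M_rhs f evA rep hE hFac hA hrepne hrep
      (Mfun L f evA (Sum.inr bw :: tw)).2 hqw
      (graveG L f (takeA w) * (Mfun L f evA (Sum.inr bw :: tw)).1) z hz
    rw [show (rep (graveG L f (takeA w) * (Mfun L f evA (Sum.inr bw :: tw)).1)).map
        (Sum.inr : A_G → A ⊕ A_G) ++
        ((Mfun L f evA (Sum.inr bw :: tw)).2.map Sum.inl ++ fcheckX L f evA rep z) =
        (rep (graveG L f (takeA w) * (Mfun L f evA (Sum.inr bw :: tw)).1)).map Sum.inr ++
        ((Mfun L f evA (Sum.inr bw :: tw)).2.map Sum.inl ++ fcheckX L f evA rep z) from rfl,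
      hmr,
      graveWord_L1 hE hFac hA (graveWord_mem_or hE hA _),
      graveG_L1 f hE hFac hA (graveWord_mem_or hE hA _), one_mul, mul_assoc]

end MainLayer
end SC


/-- equation (5). For all words `w, z ∈ X⁺` over
`X = A ⊕ A_G`, `f̌(wz) = f̌(f̌(w) f̌(z))`; in particular `f̌ ∘ f̌ = f̌`. -/
theorem fcheckX_append [Nonempty A] [Group G]
    (L : Set (List A)) (hE : [] ∉ L)
    (hFac : ∀ u w : List A, w ∈ L → u ≠ [] → u <:+: w → u ∈ L)
    (hA : ∀ a : A, [a] ∈ L)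
    (f : List A → G) (evA : A_G → G) (rep : G → List A_G)
    (hrepne : ∀ g : G, rep g ≠ [])
    (hrep : ∀ g : G, evalW evA (rep g) = g)
    (w z : List (A ⊕ A_G)) (hw : w ≠ []) (hz : z ≠ []) :
    fcheckX L f evA rep (w ++ z) =
      fcheckX L f evA rep (fcheckX L f evA rep w ++ fcheckX L f evA rep z) ∧
    fcheckX L f evA rep (fcheckX L f evA rep w) = fcheckX L f evA rep w := by
  exact ⟨SC.main_append f evA rep hE hFac hA hrepne hrep w z hw hz,
    SC.main_idem f evA rep hE hFac hA hrepne hrep w hw⟩
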